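/- Let K be a field containing the finite field K' of order q = p^s with p an odd prime, and let I ⊆ K[x₀,x₁,x₂] be the radical ideal of all K'-rational points of the projective plane except q₀ = [0:1:0]. Then the least degree of a homogeneous element of I not vanishing at q₀ is exactly 2q - 1. -/

import Mathlib

open MvPolynomial

/-- The homogeneous ideal of a point of projective space (given by a
representative `π`): the ideal generated by the homogeneous polynomials
vanishing at `π`. -/
noncomputable def pointIdeal {K : Type} [Field K] {n : ℕ} (π : Fin n → K) :
    Ideal (MvPolynomial (Fin n) K) :=
  Ideal.span {f | (∃ d, f.IsHomogeneous d) ∧ eval π f = 0}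

namespace Stmt7Aux

variable {K : Type} [Field K]

/-- Substitute `x₀ ↦ a`, `x₂ ↦ c` and keep `x₁` as the polynomial variable. -/
noncomputable def sub3 (f : MvPolynomial (Fin 3) K) (a c : K) : Polynomial K :=
  MvPolynomial.aeval ![Polynomial.C a, Polynomial.X, Polynomial.C c] f

lemma sub3_monomial (m : Fin 3 →₀ ℕ) (r : K) (a c : K) :
    sub3 (monomial m r) a c
      = Polynomial.C (r * a ^ m 0 * c ^ m 2) * Polynomial.X ^ m 1 := by
  rw [sub3, aeval_monomial, Finsupp.prod_fintype _ _ (fun i => pow_zero _),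
    Fin.prod_univ_three]
  simp only [Matrix.cons_val_zero, Matrix.cons_val_one, Matrix.head_cons,
    Matrix.cons_val_two, Matrix.tail_cons, Polynomial.algebraMap_eq,
    ← Polynomial.C_pow]
  rw [Polynomial.C_mul, Polynomial.C_mul]
  ring

lemma sub3_coeff (f : MvPolynomial (Fin 3) K) (a c : K) (n : ℕ) :
    (sub3 f a c).coeff n =
      ∑ m ∈ f.support.filter (fun m => m 1 = n), f.coeff m * a ^ m 0 * c ^ m 2 := by
  classical
  conv_lhs => rw [f.as_sum]
  rw [show (sub3 (∑ m ∈ f.support, monomial m (f.coeff m)) a c)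
      = ∑ m ∈ f.support, sub3 (monomial m (f.coeff m)) a c from map_sum _ _ _,
    Polynomial.finset_sum_coeff, Finset.sum_filter]
  refine Finset.sum_congr rfl fun m _ => ?_
  rw [sub3_monomial, Polynomial.coeff_C_mul, Polynomial.coeff_X_pow]
  rcases eq_or_ne (m 1) n with h | h
  · simp [h]
  · rw [if_neg (fun hh => h hh.symm), if_neg h, mul_zero]

lemma sub3_eval (f : MvPolynomial (Fin 3) K) (a c t : K) :
    (sub3 f a c).eval t = MvPolynomial.eval ![a, t, c] f := by
  have h : (Polynomial.evalRingHom t).comp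
        ((MvPolynomial.aeval ![Polynomial.C a, Polynomial.X, Polynomial.C c] :
          MvPolynomial (Fin 3) K →ₐ[K] Polynomial K) :
            MvPolynomial (Fin 3) K →+* Polynomial K)
      = (MvPolynomial.eval ![a, t, c] : MvPolynomial (Fin 3) K →+* K) := by
    apply MvPolynomial.ringHom_ext
    · intro r; simp
    · intro i; fin_cases i <;> simp
  exact RingHom.congr_fun h f

lemma homog_support {f : MvPolynomial (Fin 3) K} {d : ℕ} (hf : f.IsHomogeneous d)
    {m : Fin 3 →₀ ℕ} (hm : MvPolynomial.coeff m f ≠ 0) : m 0 + m 1 + m 2 = d := by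
  have h1 := hf hm
  have h2 : (Finsupp.weight (1 : Fin 3 → ℕ)) m = m 0 + m 1 + m 2 := by
    rw [Finsupp.weight_apply, Finsupp.sum_fintype _ _ (by simp), Fin.sum_univ_three]
    simp
  omega

lemma prod_eq_X_pow_sub_X [DecidableEq K] (K' : Subfield K) [Fintype K'] :
    ((Finset.univ.image (Subtype.val : K' → K)).val.map fun t => Polynomial.X - Polynomial.C t).prod
      = Polynomial.X ^ (Fintype.card K') - Polynomial.X := by
  classical
  set q := Fintype.card K' with hq
  have hq2 : 2 ≤ q := Fintype.one_lt_card
  set T : Finset K := Finset.univ.image (Subtype.val : K' → K) with hT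
  set N : Polynomial K := Polynomial.X ^ q - Polynomial.X with hN
  have hNcoeff : N.coeff q = 1 := by
    simp [hN, Polynomial.coeff_X_pow, Polynomial.coeff_X, show ¬(1 = q) by omega, show ¬(q = 1) by omega]
  have hN0 : N ≠ 0 := fun h => by simp [h] at hNcoeff
  have hNdeg : N.natDegree = q := by
    rw [hN, Polynomial.natDegree_sub_eq_left_of_natDegree_lt, Polynomial.natDegree_X_pow]
    rw [Polynomial.natDegree_X, Polynomial.natDegree_X_pow]; omega
  have hTcard : T.card = q := by
    rw [hT, Finset.card_image_of_injective _ Subtype.val_injective, Finset.card_univ, hq]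
  have hdvd : (T.val.map fun t => Polynomial.X - Polynomial.C t).prod ∣ N := by
    rw [Multiset.prod_X_sub_C_dvd_iff_le_roots hN0]
    rw [Multiset.le_iff_subset T.nodup]
    intro t ht
    rw [Polynomial.mem_roots hN0]
    obtain ⟨u, -, rfl⟩ := Finset.mem_image.mp ht
    have hu : (u : K) ^ q = u := by
      have := FiniteField.pow_card u
      calc (u : K) ^ q = ((u ^ q : K') : K) := by push_cast; ring
        _ = u := by rw [this]
    simp [Polynomial.IsRoot, hN, hu]
  have hDmonic : ((T.val.map fun t => Polynomial.X - Polynomial.C t).prod).Monic :=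
    Polynomial.monic_multiset_prod_of_monic _ _ fun t _ => Polynomial.monic_X_sub_C t
  have hDdeg : ((T.val.map fun t => Polynomial.X - Polynomial.C t).prod).natDegree = q := by
    rw [Polynomial.natDegree_multiset_prod_of_monic _ fun t ht => ?_]
    · simp [hTcard]
    · simp only [Multiset.mem_map] at ht
      obtain ⟨a, -, rfl⟩ := ht
      exact Polynomial.monic_X_sub_C a
  obtain ⟨k, hk⟩ := hdvd
  have hk0 : k ≠ 0 := by rintro rfl; simp [hk] at hN0
  have hD0 : (T.val.map fun t => Polynomial.X - Polynomial.C t).prod ≠ 0 := hDmonic.ne_zero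
  have hkdeg : k.natDegree = 0 := by
    have := Polynomial.natDegree_mul hD0 hk0
    rw [← hk, hNdeg, hDdeg] at this; omega
  have hklead : k.coeff 0 = 1 := by
    have h1 : N.leadingCoeff = 1 := by
      rw [Polynomial.leadingCoeff, hNdeg, hNcoeff]
    rw [hk, Polynomial.leadingCoeff_mul, hDmonic.leadingCoeff, one_mul,
      Polynomial.leadingCoeff, hkdeg] at h1
    exact h1
  have hk1 : k = 1 := by
    rw [Polynomial.eq_C_of_natDegree_eq_zero hkdeg, hklead, map_one]
  rw [hk1, mul_one] at hk
  exact hk.symm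

lemma X_pow_card_sub_X_dvd (K' : Subfield K) [Fintype K'] (P : Polynomial K) (hP : P ≠ 0)
    (h : ∀ t : K', P.eval (t : K) = 0) :
    (Polynomial.X ^ (Fintype.card K') - Polynomial.X) ∣ P := by
  classical
  rw [← prod_eq_X_pow_sub_X K']
  rw [Multiset.prod_X_sub_C_dvd_iff_le_roots hP]
  rw [Multiset.le_iff_subset (Finset.univ.image (Subtype.val : K' → K)).nodup]
  intro t ht
  rw [Polynomial.mem_roots hP]
  obtain ⟨u, -, rfl⟩ := Finset.mem_image.mp ht
  exact h u

lemma coeff_eq_neg {q d : ℕ} (hq : 2 ≤ q) (hd : d ≤ 2 * q - 2) (hqd : q ≤ d)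
    (P : Polynomial K) (hPd : P.natDegree ≤ d)
    (hdvd : (Polynomial.X ^ q - Polynomial.X) ∣ P)
    (hc : P.coeff d ≠ 0) : P.coeff (d - q + 1) = - P.coeff d := by
  obtain ⟨H, hH⟩ := hdvd
  have hP0 : P ≠ 0 := fun h => hc (by simp [h])
  have hH0 : H ≠ 0 := by rintro rfl; simp [hH] at hP0
  have hN0 : (Polynomial.X ^ q - Polynomial.X : Polynomial K) ≠ 0 := by
    rintro h; rw [h, zero_mul] at hH; exact hP0 hH
  have hNdeg : (Polynomial.X ^ q - Polynomial.X : Polynomial K).natDegree = q := by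
    rw [Polynomial.natDegree_sub_eq_left_of_natDegree_lt, Polynomial.natDegree_X_pow]
    rw [Polynomial.natDegree_X, Polynomial.natDegree_X_pow]; omega
  have hPdeg : P.natDegree = d := le_antisymm hPd (Polynomial.le_natDegree_of_ne_zero hc)
  have hHdeg : H.natDegree = d - q := by
    have := Polynomial.natDegree_mul hN0 hH0
    rw [← hH, hPdeg, hNdeg] at this; omega
  have hH' : P = H * Polynomial.X ^ q - H * Polynomial.X ^ 1 := by rw [hH]; ring
  have hcoeff : ∀ n : ℕ, P.coeff n
      = (if q ≤ n then H.coeff (n - q) else 0) - (if 1 ≤ n then H.coeff (n - 1) else 0) := by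
    intro n
    rw [hH', Polynomial.coeff_sub, Polynomial.coeff_mul_X_pow', Polynomial.coeff_mul_X_pow']
  have htop : P.coeff d = H.coeff (d - q) := by
    rw [hcoeff d, if_pos hqd, if_pos (by omega), Polynomial.coeff_eq_zero_of_natDegree_lt
      (by omega : H.natDegree < d - 1), sub_zero]
  have hj : P.coeff (d - q + 1) = - H.coeff (d - q) := by
    rw [hcoeff (d - q + 1), if_neg (by omega), if_pos (by omega), zero_sub,
      show d - q + 1 - 1 = d - q from rfl]
  rw [hj, htop]

lemma isHomog_pow {φ : MvPolynomial (Fin 3) K} {n : ℕ} (h : φ.IsHomogeneous n) (k : ℕ) :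
    (φ ^ k).IsHomogeneous (n * k) := by
  induction k with
  | zero => simpa using MvPolynomial.isHomogeneous_one (Fin 3) K
  | succ k ih => rw [pow_succ, Nat.mul_succ]; exact ih.mul h

lemma natDegree_X_pow_sub_X {q : ℕ} (hq : 2 ≤ q) :
    (Polynomial.X ^ q - Polynomial.X : Polynomial K).natDegree = q := by
  rw [Polynomial.natDegree_sub_eq_left_of_natDegree_lt, Polynomial.natDegree_X_pow]
  rw [Polynomial.natDegree_X, Polynomial.natDegree_X_pow]; omega

end Stmt7Aux

theorem stmt7 (p s : ℕ) (hp : p.Prime) (hp2 : 2 < p) (hs : 1 ≤ s)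
    (K : Type) [Field K] [CharP K p] (K' : Subfield K) [Fintype K']
    (hcard : Fintype.card K' = p ^ s) :
    -- the excluded point q₀ = [0:1:0]
    let q0 : Fin 3 → K := fun i => if i = 1 then 1 else 0
    -- representatives of the K'-points of P² other than q₀
    let S : Set (Fin 3 → K) :=
      {π | π ≠ 0 ∧ (∀ i, π i ∈ K') ∧ ¬∃ c : K, π = c • q0}
    let I : Ideal (MvPolynomial (Fin 3) K) := ⨅ π ∈ S, pointIdeal π
    IsLeast {d | ∃ f ∈ I, f.IsHomogeneous d ∧ eval q0 f ≠ 0}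
      (2 * p ^ s - 1) := by
  classical
  intro q0 S I
  open Stmt7Aux in
  set q := p ^ s with hqdef
  have hq3 : 3 ≤ q := by
    calc 3 ≤ p := hp2
      _ = p ^ 1 := (pow_one p).symm
      _ ≤ p ^ s := Nat.pow_le_pow_right (by omega) hs
  have hq2 : 2 ≤ q := by omega
  have hq00 : q0 0 = 0 := rfl
  have hq01 : q0 1 = 1 := rfl
  have hq02 : q0 2 = 0 := rfl
  -- membership in S
  have hmemS : ∀ a b c : K, a ∈ K' → b ∈ K' → c ∈ K' → (a ≠ 0 ∨ c ≠ 0) →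
      (![a, b, c] : Fin 3 → K) ∈ S := by
    intro a b c ha hb hc hac
    refine ⟨?_, ?_, ?_⟩
    · intro h
      have h0 := congrFun h 0
      have h2 := congrFun h 2
      simp at h0 h2
      tauto
    · intro i; fin_cases i <;> simpa
    · rintro ⟨e, he⟩
      rcases hac with h0 | h0
      · have := congrFun he 0
        rw [Pi.smul_apply, hq00, smul_zero] at this
        exact h0 (by simpa using this)
      · have := congrFun he 2
        rw [Pi.smul_apply, hq02, smul_zero] at this
        exact h0 (by simpa using this)
  -- Fermat
  have hpow1 : ∀ b : K, b ∈ K' → b ≠ 0 → b ^ (q - 1) = 1 := by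
    intro b hb hb0
    have h1 : (⟨b, hb⟩ : K') ≠ 0 := fun h => hb0 (congrArg Subtype.val h)
    have h2 := FiniteField.pow_card_sub_one_eq_one (⟨b, hb⟩ : K') h1
    rw [hcard] at h2
    calc b ^ (q - 1) = ((((⟨b, hb⟩ : K') ^ (q - 1) : K')) : K) := by push_cast; ring
      _ = 1 := by rw [h2]; rfl
  -- the witness polynomial
  set F : MvPolynomial (Fin 3) K :=
    X 1 * (X 1 ^ (q - 1) - X 0 ^ (q - 1)) * (X 1 ^ (q - 1) - X 2 ^ (q - 1)) with hF
  have hFhom : F.IsHomogeneous (2 * q - 1) := by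
    have h1 : (X 1 : MvPolynomial (Fin 3) K).IsHomogeneous 1 := isHomogeneous_X _ _
    have h0 : (X 0 : MvPolynomial (Fin 3) K).IsHomogeneous 1 := isHomogeneous_X _ _
    have h2 : (X 2 : MvPolynomial (Fin 3) K).IsHomogeneous 1 := isHomogeneous_X _ _
    have hA : ((X 1 ^ (q - 1) - X 0 ^ (q - 1)) : MvPolynomial (Fin 3) K).IsHomogeneous
        (1 * (q - 1)) := (isHomog_pow h1 _).sub (isHomog_pow h0 _)
    have hB : ((X 1 ^ (q - 1) - X 2 ^ (q - 1)) : MvPolynomial (Fin 3) K).IsHomogeneous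
        (1 * (q - 1)) := (isHomog_pow h1 _).sub (isHomog_pow h2 _)
    have := (h1.mul hA).mul hB
    rw [show 2 * q - 1 = 1 + 1 * (q - 1) + 1 * (q - 1) by omega]
    exact this
  have hFq0 : MvPolynomial.eval q0 F = 1 := by
    rw [hF]
    simp only [map_mul, map_sub, map_pow, MvPolynomial.eval_X, hq00, hq01, hq02]
    rw [zero_pow (by omega : q - 1 ≠ 0), one_pow]
    ring
  have hFS : ∀ π ∈ S, MvPolynomial.eval π F = 0 := by
    rintro π ⟨hπ0, hπK, hπq0⟩
    have h02 : π 0 ≠ 0 ∨ π 2 ≠ 0 := by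
      by_contra h
      push_neg at h
      refine hπq0 ⟨π 1, funext fun i => ?_⟩
      fin_cases i
      · show π 0 = π 1 • q0 0
        rw [hq00, smul_zero]; exact h.1
      · show π 1 = π 1 • q0 1
        rw [hq01, smul_eq_mul, mul_one]
      · show π 2 = π 1 • q0 2
        rw [hq02, smul_zero]; exact h.2
    have hev : MvPolynomial.eval π F
        = π 1 * (π 1 ^ (q - 1) - π 0 ^ (q - 1)) * (π 1 ^ (q - 1) - π 2 ^ (q - 1)) := by
      rw [hF]
      simp only [map_mul, map_sub, map_pow, MvPolynomial.eval_X]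
    rw [hev]
    by_cases hb0 : π 1 = 0
    · rw [hb0]; ring
    · rcases h02 with h0 | h0
      · rw [hpow1 _ (hπK 1) hb0, hpow1 _ (hπK 0) h0]; ring
      · rw [hpow1 _ (hπK 1) hb0, hpow1 _ (hπK 2) h0]; ring
  have hFI : F ∈ I := by
    refine Ideal.mem_iInf.mpr fun π => Ideal.mem_iInf.mpr fun hπ => ?_
    exact Ideal.subset_span ⟨⟨_, hFhom⟩, hFS π hπ⟩
  constructor
  · exact ⟨F, hFI, hFhom, by rw [hFq0]; exact one_ne_zero⟩
  -- lower bound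
  rintro d ⟨f, hfI, hfhom, hfq0⟩
  by_contra hlt
  push_neg at hlt
  have hd : d ≤ 2 * q - 2 := by omega
  have hIeval : ∀ π ∈ S, MvPolynomial.eval π f = 0 := by
    intro π hπ
    have h1 : f ∈ pointIdeal π := Ideal.mem_iInf.mp (Ideal.mem_iInf.mp hfI π) hπ
    have h2 : pointIdeal π ≤ RingHom.ker (MvPolynomial.eval π) :=
      Ideal.span_le.mpr fun g hg => RingHom.mem_ker.mpr hg.2
    exact RingHom.mem_ker.mp (h2 h1)
  set lam := f.coeff (Finsupp.single 1 d) with hlamdef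
  have hsupp : ∀ m ∈ f.support, m 0 + m 1 + m 2 = d := fun m hm =>
    homog_support hfhom (MvPolynomial.mem_support_iff.mp hm)
  have hsingle_eq : ∀ m : Fin 3 →₀ ℕ, m ∈ f.support → m 0 = 0 → m 2 = 0 →
      m = Finsupp.single 1 d := by
    intro m hm h0 h2
    have h3 := hsupp m hm
    ext i
    fin_cases i <;> simp [Finsupp.single_apply] <;> omega
  -- top coefficient of sub3
  have hcoefftop : ∀ a c : K, (sub3 f a c).coeff d = lam := by
    intro a c
    rw [sub3_coeff]
    have hfil : f.support.filter (fun m => m 1 = d) ⊆ {Finsupp.single 1 d} := by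
      intro m hm
      rw [Finset.mem_filter] at hm
      have h3 := hsupp m hm.1
      rw [Finset.mem_singleton]
      exact hsingle_eq m hm.1 (by omega) (by omega)
    rw [Finset.sum_subset hfil ?_]
    · rw [Finset.sum_singleton]
      simp [Finsupp.single_apply, hlamdef]
    · intro x hx hxf
      rw [Finset.mem_singleton] at hx
      subst hx
      have hc0 : f.coeff (Finsupp.single 1 d) = 0 := by
        by_contra hc
        exact hxf (Finset.mem_filter.mpr ⟨MvPolynomial.mem_support_iff.mpr hc, by
          simp [Finsupp.single_apply]⟩)
      rw [hc0]; ring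
  -- eval at q0
  have hevalq0 : MvPolynomial.eval q0 f = lam := by
    rw [MvPolynomial.eval_eq']
    have e1 : ∑ m ∈ f.support, f.coeff m * ∏ i, q0 i ^ m i
        = ∑ m ∈ insert (Finsupp.single 1 d) f.support, f.coeff m * ∏ i, q0 i ^ m i :=
      Finset.sum_subset (Finset.subset_insert _ _) (fun x _ hxn => by
        rw [MvPolynomial.notMem_support_iff.mp hxn]; ring)
    have e2 : ∑ m ∈ ({Finsupp.single 1 d} : Finset (Fin 3 →₀ ℕ)), f.coeff m * ∏ i, q0 i ^ m i
        = ∑ m ∈ insert (Finsupp.single 1 d) f.support, f.coeff m * ∏ i, q0 i ^ m i := by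
      refine Finset.sum_subset (fun x hx => ?_) (fun x hx hxn => ?_)
      · rw [Finset.mem_singleton] at hx; subst hx; exact Finset.mem_insert_self _ _
      · rw [Finset.mem_singleton] at hxn
        rcases Finset.mem_insert.mp hx with h | h
        · exact absurd h hxn
        · have h02 : x 0 ≠ 0 ∨ x 2 ≠ 0 := by
            by_contra hcon
            push_neg at hcon
            exact hxn (hsingle_eq x h hcon.1 hcon.2)
          rw [Fin.prod_univ_three, hq00, hq01, hq02]
          rcases h02 with h0 | h0
          · rw [zero_pow h0]; ring
          · rw [zero_pow h0]; ring
    rw [e1, ← e2, Finset.sum_singleton, Fin.prod_univ_three, hq00, hq01, hq02]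
    simp [Finsupp.single_apply, hlamdef]
  have hlam0 : lam ≠ 0 := fun h => hfq0 (by rw [hevalq0, h])
  -- degree bound for sub3
  have hnatdeg : ∀ a c : K, (sub3 f a c).natDegree ≤ d := by
    intro a c
    rw [Polynomial.natDegree_le_iff_coeff_eq_zero]
    intro N hN
    rw [sub3_coeff]
    refine Finset.sum_eq_zero fun m hm => ?_
    rw [Finset.mem_filter] at hm
    have := hsupp m hm.1
    exact absurd hm.2 (by omega)
  -- the key divisibility facts
  have hdvd : ∀ a c : K, a ∈ K' → c ∈ K' → (a ≠ 0 ∨ c ≠ 0) →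
      (Polynomial.X ^ q - Polynomial.X) ∣ sub3 f a c := by
    intro a c ha hc hac
    have hroot : ∀ t : K', (sub3 f a c).eval (t : K) = 0 := by
      intro t
      rw [sub3_eval]
      exact hIeval _ (hmemS a t c ha t.2 hc hac)
    have hP0 : sub3 f a c ≠ 0 := fun h => hlam0 (by
      rw [← hcoefftop a c, h, Polynomial.coeff_zero])
    have := X_pow_card_sub_X_dvd K' _ hP0 hroot
    rwa [hcard] at this
  have hP0' : ∀ a c : K, sub3 f a c ≠ 0 := fun a c h => hlam0 (by
    rw [← hcoefftop a c, h, Polynomial.coeff_zero])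
  have hqd : q ≤ d := by
    have h1 := Polynomial.natDegree_le_of_dvd (hdvd 0 1 (zero_mem K') (one_mem K')
      (Or.inr one_ne_zero)) (hP0' 0 1)
    rw [natDegree_X_pow_sub_X hq2] at h1
    exact h1.trans (hnatdeg 0 1)
  have hneg : ∀ a c : K, a ∈ K' → c ∈ K' → (a ≠ 0 ∨ c ≠ 0) →
      (sub3 f a c).coeff (d - q + 1) = -lam := by
    intro a c ha hc hac
    rw [← hcoefftop a c]
    exact coeff_eq_neg hq2 hd hqd _ (hnatdeg a c) (hdvd a c ha hc hac)
      (by rw [hcoefftop]; exact hlam0)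
  -- the auxiliary univariate polynomial Q
  set j := d - q + 1 with hjdef
  set Q : Polynomial K := ∑ m ∈ f.support.filter (fun m => m 1 = j),
      Polynomial.C (f.coeff m) * Polynomial.X ^ (m 2) with hQdef
  have hQcoeff : ∀ N, Q.coeff N = ∑ m ∈ f.support.filter (fun m => m 1 = j),
      (if m 2 = N then f.coeff m else 0) := by
    intro N
    rw [hQdef, Polynomial.finset_sum_coeff]
    refine Finset.sum_congr rfl fun m _ => ?_
    rw [Polynomial.coeff_C_mul, Polynomial.coeff_X_pow]
    rcases eq_or_ne (m 2) N with h | h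
    · simp [h]
    · rw [if_neg (fun hh => h hh.symm), if_neg h, mul_zero]
  have hQeval : ∀ c : K, Q.eval c = (sub3 f 1 c).coeff j := by
    intro c
    rw [sub3_coeff, hQdef, Polynomial.eval_finset_sum]
    refine Finset.sum_congr rfl fun m _ => ?_
    simp
  have hQdeg : Q.natDegree ≤ q - 1 := by
    rw [Polynomial.natDegree_le_iff_coeff_eq_zero]
    intro N hN
    rw [hQcoeff]
    refine Finset.sum_eq_zero fun m hm => ?_
    rw [Finset.mem_filter] at hm
    have h3 := hsupp m hm.1
    have h4 := hm.2
    rw [if_neg (by omega)]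
  have hQzero : Q + Polynomial.C lam = 0 := by
    refine Polynomial.eq_zero_of_natDegree_lt_card_of_eval_eq_zero _
      (Subtype.val_injective : Function.Injective ((↑) : K' → K)) (fun t => ?_) ?_
    · rw [Polynomial.eval_add, Polynomial.eval_C, hQeval,
        hneg 1 t (one_mem K') t.2 (Or.inl one_ne_zero)]
      ring
    · rw [hcard]
      have h5 := Polynomial.natDegree_add_le Q (Polynomial.C lam)
      rw [Polynomial.natDegree_C] at h5
      have h6 : max Q.natDegree 0 = Q.natDegree := max_eq_left (Nat.zero_le _)
      rw [h6] at h5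
      omega
  have hQC : Q = Polynomial.C (-lam) := by
    rw [map_neg]
    exact eq_neg_of_add_eq_zero_left hQzero
  have h1 : Q.coeff (q - 1) = 0 := by
    rw [hQC, Polynomial.coeff_C, if_neg (by omega)]
  have h2 : Q.coeff (q - 1) = (sub3 f 0 1).coeff j := by
    rw [hQcoeff, sub3_coeff]
    refine Finset.sum_congr rfl fun m hm => ?_
    rw [Finset.mem_filter] at hm
    have h3 := hsupp m hm.1
    have h4 := hm.2
    rcases eq_or_ne (m 2) (q - 1) with h | h
    · have h0 : m 0 = 0 := by omega
      rw [if_pos h, h0, pow_zero, one_pow]; ring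
    · have h0 : m 0 ≠ 0 := by omega
      rw [if_neg h, zero_pow h0, one_pow]; ring
  rw [h2, hneg 0 1 (zero_mem K') (one_mem K') (Or.inr one_ne_zero)] at h1
  exact hlam0 (neg_eq_zero.mp h1)
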